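/- Let δ be a nonzero PPT state on ℂ²⊗ℂ²⊗ℂᴺ which is an edge state, and let P, Q, R, S be positive semidefinite matrices on ℂ²⊗ℂ²⊗ℂᴺ with Range(P) = ker(δ), Range(Q) = ker(δ^{t_A}), Range(R) = ker(δ^{t_B}) and Range(S) = ker(δ^{t_{AB}}). Then ε := inf { ⟨e⊗f⊗g, (P + Q^{t_A} + R^{t_B} + S^{t_{AB}}) (e⊗f⊗g)⟩ : e, f ∈ ℂ², g ∈ ℂᴺ unit vectors } is strictly positive. -/

import Mathlib

open Matrix BigOperators ComplexOrder

noncomputable section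

/-- Partial transpose with respect to Alice (the first `Fin 2` factor). -/
def ptA {N : ℕ} (ρ : Matrix (Fin 2 × Fin 2 × Fin N) (Fin 2 × Fin 2 × Fin N) ℂ) :
    Matrix (Fin 2 × Fin 2 × Fin N) (Fin 2 × Fin 2 × Fin N) ℂ :=
  fun x y => ρ (y.1, x.2.1, x.2.2) (x.1, y.2.1, y.2.2)

/-- Partial transpose with respect to Bob (the second `Fin 2` factor). -/
def ptB {N : ℕ} (ρ : Matrix (Fin 2 × Fin 2 × Fin N) (Fin 2 × Fin 2 × Fin N) ℂ) :
    Matrix (Fin 2 × Fin 2 × Fin N) (Fin 2 × Fin 2 × Fin N) ℂ :=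
  fun x y => ρ (x.1, y.2.1, x.2.2) (y.1, x.2.1, y.2.2)

/-- Partial transpose with respect to Alice and Bob. -/
def ptAB {N : ℕ} (ρ : Matrix (Fin 2 × Fin 2 × Fin N) (Fin 2 × Fin 2 × Fin N) ℂ) :
    Matrix (Fin 2 × Fin 2 × Fin N) (Fin 2 × Fin 2 × Fin N) ℂ :=
  ptB (ptA ρ)

/-- PPT: all partial transposes are positive semidefinite. -/
def IsPPT {N : ℕ} (ρ : Matrix (Fin 2 × Fin 2 × Fin N) (Fin 2 × Fin 2 × Fin N) ℂ) : Prop :=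
  (ptA ρ).PosSemidef ∧ (ptB ρ).PosSemidef ∧ (ptAB ρ).PosSemidef

/-- The product vector `e ⊗ f ⊗ g`. -/
def prodVec {N : ℕ} (e f : Fin 2 → ℂ) (g : Fin N → ℂ) : Fin 2 × Fin 2 × Fin N → ℂ :=
  fun x => e x.1 * f x.2.1 * g x.2.2

/-- The rank-one outer product `v v†`. -/
def outer {n : Type*} (v : n → ℂ) : Matrix n n ℂ := Matrix.vecMulVec v (star v)

/-- Full separability of a tripartite state. -/
def SeparableState {N : ℕ} (ρ : Matrix (Fin 2 × Fin 2 × Fin N) (Fin 2 × Fin 2 × Fin N) ℂ) : Prop :=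
  ∃ (k : ℕ) (p : Fin k → ℝ) (e f : Fin k → Fin 2 → ℂ) (g : Fin k → Fin N → ℂ),
    (∀ i, 0 ≤ p i) ∧
    ρ = ∑ i, (p i : ℂ) • outer (prodVec (e i) (f i) (g i))

/-- Reduced matrix of Alice. -/
def redA {N : ℕ} (ρ : Matrix (Fin 2 × Fin 2 × Fin N) (Fin 2 × Fin 2 × Fin N) ℂ) :
    Matrix (Fin 2) (Fin 2) ℂ :=
  fun a a' => ∑ b : Fin 2, ∑ c : Fin N, ρ (a, b, c) (a', b, c)

/-- Reduced matrix of Bob. -/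
def redB {N : ℕ} (ρ : Matrix (Fin 2 × Fin 2 × Fin N) (Fin 2 × Fin 2 × Fin N) ℂ) :
    Matrix (Fin 2) (Fin 2) ℂ :=
  fun b b' => ∑ a : Fin 2, ∑ c : Fin N, ρ (a, b, c) (a, b', c)

/-- Reduced matrix of Charlie. -/
def redC {N : ℕ} (ρ : Matrix (Fin 2 × Fin 2 × Fin N) (Fin 2 × Fin 2 × Fin N) ℂ) :
    Matrix (Fin N) (Fin N) ℂ :=
  fun c c' => ∑ a : Fin 2, ∑ b : Fin 2, ρ (a, b, c) (a, b, c')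

/-- `ρ` is supported on `ℂ² ⊗ ℂ² ⊗ ℂᴺ`: all single-party reduced matrices have full rank. -/
def SupportedOn {N : ℕ} (ρ : Matrix (Fin 2 × Fin 2 × Fin N) (Fin 2 × Fin 2 × Fin N) ℂ) : Prop :=
  (redA ρ).rank = 2 ∧ (redB ρ).rank = 2 ∧ (redC ρ).rank = N

/-- `v` is in the range of the matrix `M`. -/
def InRange {N : ℕ} (M : Matrix (Fin 2 × Fin 2 × Fin N) (Fin 2 × Fin 2 × Fin N) ℂ)
    (v : Fin 2 × Fin 2 × Fin N → ℂ) : Prop :=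
  ∃ w, M.mulVec w = v

/-- A PPT state `δ` is an edge state: no nonzero product vector `e⊗f⊗g` lies in the range
of `δ` with its partial conjugates in the ranges of the partial transposes. -/
def IsEdgeState {N : ℕ} (δ : Matrix (Fin 2 × Fin 2 × Fin N) (Fin 2 × Fin 2 × Fin N) ℂ) :
    Prop :=
  ¬ ∃ (e f : Fin 2 → ℂ) (g : Fin N → ℂ), e ≠ 0 ∧ f ≠ 0 ∧ g ≠ 0 ∧
    InRange δ (prodVec e f g) ∧
    InRange (ptA δ) (prodVec (star e) f g) ∧
    InRange (ptB δ) (prodVec e (star f) g) ∧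
    InRange (ptAB δ) (prodVec (star e) (star f) g)

/-- The set of values `⟨e⊗f⊗g, (P + Q^{t_A} + R^{t_B} + S^{t_{AB}}) e⊗f⊗g⟩` over unit
vectors `e`, `f`, `g`. -/
def epsSet {N : ℕ} (P Q R S : Matrix (Fin 2 × Fin 2 × Fin N) (Fin 2 × Fin 2 × Fin N) ℂ) :
    Set ℝ :=
  {r : ℝ | ∃ (e f : Fin 2 → ℂ) (g : Fin N → ℂ),
    star e ⬝ᵥ e = 1 ∧ star f ⬝ᵥ f = 1 ∧ star g ⬝ᵥ g = 1 ∧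
    (r : ℂ) = star (prodVec e f g) ⬝ᵥ
      (P + ptA Q + ptB R + ptAB S).mulVec (prodVec e f g)}

lemma aux_ker_eq_range {n : Type*} [Fintype n] [DecidableEq n]
    (A B : Matrix n n ℂ) (hA : A.IsHermitian) (hB : B.IsHermitian)
    (h : LinearMap.range B.mulVecLin = LinearMap.ker A.mulVecLin) :
    LinearMap.ker B.mulVecLin = LinearMap.range A.mulVecLin := by
  have key : ∀ w, A.mulVec (B.mulVec w) = 0 := by
    intro w
    have hw : B.mulVecLin w ∈ LinearMap.ker A.mulVecLin := h ▸ LinearMap.mem_range_self _ w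
    simpa [Matrix.mulVecLin_apply] using hw
  have hAB : A * B = 0 := by
    ext i j
    have := congrFun (key (Pi.single j 1)) i
    rw [Matrix.mulVec_mulVec] at this
    simpa [Matrix.mulVec_single] using this
  have hBA : B * A = 0 := by
    have := congrArg Matrix.conjTranspose hAB
    rwa [Matrix.conjTranspose_mul, hA, hB, Matrix.conjTranspose_zero] at this
  have hle : LinearMap.range A.mulVecLin ≤ LinearMap.ker B.mulVecLin := by
    rintro _ ⟨w, rfl⟩
    simp only [LinearMap.mem_ker, Matrix.mulVecLin_apply, Matrix.mulVec_mulVec, hBA,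
      Matrix.zero_mulVec]
  have h1 := LinearMap.finrank_range_add_finrank_ker A.mulVecLin
  have h2 := LinearMap.finrank_range_add_finrank_ker B.mulVecLin
  have h3 : Module.finrank ℂ (LinearMap.range B.mulVecLin)
      = Module.finrank ℂ (LinearMap.ker A.mulVecLin) := by rw [h]
  exact (Submodule.eq_of_le_of_finrank_eq hle (by omega)).symm

lemma quad_ptA {N : ℕ} (Q : Matrix (Fin 2 × Fin 2 × Fin N) (Fin 2 × Fin 2 × Fin N) ℂ)
    (e f : Fin 2 → ℂ) (g : Fin N → ℂ) :
    star (prodVec e f g) ⬝ᵥ (ptA Q) *ᵥ prodVec e f g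
      = star (prodVec (star e) f g) ⬝ᵥ Q *ᵥ prodVec (star e) f g := by
  have hinv : Function.Involutive
      (fun p : (Fin 2 × Fin 2 × Fin N) × (Fin 2 × Fin 2 × Fin N) =>
        ((p.2.1, p.1.2.1, p.1.2.2), (p.1.1, p.2.2.1, p.2.2.2))) := fun p => rfl
  have key : ∀ (F : (Fin 2 × Fin 2 × Fin N) → (Fin 2 × Fin 2 × Fin N) → ℂ),
      (∑ x : Fin 2 × Fin 2 × Fin N, ∑ y : Fin 2 × Fin 2 × Fin N, F x y)
        = ∑ x : Fin 2 × Fin 2 × Fin N, ∑ y : Fin 2 × Fin 2 × Fin N,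
            F (y.1, x.2.1, x.2.2) (x.1, y.2.1, y.2.2) := by
    intro F
    have e1 : (∑ x : Fin 2 × Fin 2 × Fin N, ∑ y : Fin 2 × Fin 2 × Fin N, F x y)
        = ∑ p : (Fin 2 × Fin 2 × Fin N) × (Fin 2 × Fin 2 × Fin N), F p.1 p.2 :=
      (Fintype.sum_prod_type (f := fun p : (Fin 2 × Fin 2 × Fin N) × (Fin 2 × Fin 2 × Fin N) => F p.1 p.2)).symm
    have e2 : (∑ x : Fin 2 × Fin 2 × Fin N, ∑ y : Fin 2 × Fin 2 × Fin N,
          F (y.1, x.2.1, x.2.2) (x.1, y.2.1, y.2.2))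
        = ∑ p : (Fin 2 × Fin 2 × Fin N) × (Fin 2 × Fin 2 × Fin N),
            F (p.2.1, p.1.2.1, p.1.2.2) (p.1.1, p.2.2.1, p.2.2.2) :=
      (Fintype.sum_prod_type
        (f := fun p : (Fin 2 × Fin 2 × Fin N) × (Fin 2 × Fin 2 × Fin N) =>
          F (p.2.1, p.1.2.1, p.1.2.2) (p.1.1, p.2.2.1, p.2.2.2))).symm
    rw [e1, e2]
    exact (Equiv.sum_comp (hinv.toPerm _) (fun p => F p.1 p.2)).symm
  have hr : star (prodVec (star e) f g) ⬝ᵥ Q *ᵥ prodVec (star e) f g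
      = ∑ x, ∑ y, star (prodVec (star e) f g x) * (Q x y * prodVec (star e) f g y) := by
    simp [dotProduct, Matrix.mulVec, Finset.mul_sum]
  rw [hr, key]
  simp only [dotProduct, Matrix.mulVec, Finset.mul_sum, ptA]
  refine Finset.sum_congr rfl fun x _ => Finset.sum_congr rfl fun y _ => ?_
  simp only [prodVec, Pi.star_apply, StarMul.star_mul, star_star]
  ring

lemma quad_ptB {N : ℕ} (Q : Matrix (Fin 2 × Fin 2 × Fin N) (Fin 2 × Fin 2 × Fin N) ℂ)
    (e f : Fin 2 → ℂ) (g : Fin N → ℂ) :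
    star (prodVec e f g) ⬝ᵥ (ptB Q) *ᵥ prodVec e f g
      = star (prodVec e (star f) g) ⬝ᵥ Q *ᵥ prodVec e (star f) g := by
  have hinv : Function.Involutive
      (fun p : (Fin 2 × Fin 2 × Fin N) × (Fin 2 × Fin 2 × Fin N) =>
        ((p.1.1, p.2.2.1, p.1.2.2), (p.2.1, p.1.2.1, p.2.2.2))) := fun p => rfl
  have key : ∀ (F : (Fin 2 × Fin 2 × Fin N) → (Fin 2 × Fin 2 × Fin N) → ℂ),
      (∑ x : Fin 2 × Fin 2 × Fin N, ∑ y : Fin 2 × Fin 2 × Fin N, F x y)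
        = ∑ x : Fin 2 × Fin 2 × Fin N, ∑ y : Fin 2 × Fin 2 × Fin N,
            F (x.1, y.2.1, x.2.2) (y.1, x.2.1, y.2.2) := by
    intro F
    have e1 : (∑ x : Fin 2 × Fin 2 × Fin N, ∑ y : Fin 2 × Fin 2 × Fin N, F x y)
        = ∑ p : (Fin 2 × Fin 2 × Fin N) × (Fin 2 × Fin 2 × Fin N), F p.1 p.2 :=
      (Fintype.sum_prod_type (f := fun p : (Fin 2 × Fin 2 × Fin N) × (Fin 2 × Fin 2 × Fin N) => F p.1 p.2)).symm
    have e2 : (∑ x : Fin 2 × Fin 2 × Fin N, ∑ y : Fin 2 × Fin 2 × Fin N,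
          F (x.1, y.2.1, x.2.2) (y.1, x.2.1, y.2.2))
        = ∑ p : (Fin 2 × Fin 2 × Fin N) × (Fin 2 × Fin 2 × Fin N),
            F (p.1.1, p.2.2.1, p.1.2.2) (p.2.1, p.1.2.1, p.2.2.2) :=
      (Fintype.sum_prod_type
        (f := fun p : (Fin 2 × Fin 2 × Fin N) × (Fin 2 × Fin 2 × Fin N) =>
          F (p.1.1, p.2.2.1, p.1.2.2) (p.2.1, p.1.2.1, p.2.2.2))).symm
    rw [e1, e2]
    exact (Equiv.sum_comp (hinv.toPerm _) (fun p : (Fin 2 × Fin 2 × Fin N) × (Fin 2 × Fin 2 × Fin N) => F p.1 p.2)).symm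
  have hr : star (prodVec e (star f) g) ⬝ᵥ Q *ᵥ prodVec e (star f) g
      = ∑ x : Fin 2 × Fin 2 × Fin N, ∑ y : Fin 2 × Fin 2 × Fin N,
          star (prodVec e (star f) g x) * (Q x y * prodVec e (star f) g y) := by
    simp [dotProduct, Matrix.mulVec, Finset.mul_sum]
  rw [hr, key]
  simp only [dotProduct, Matrix.mulVec, Finset.mul_sum, ptB]
  refine Finset.sum_congr rfl fun x _ => Finset.sum_congr rfl fun y _ => ?_
  simp only [prodVec, Pi.star_apply, StarMul.star_mul, star_star]
  ring

lemma quad_ptAB {N : ℕ} (Q : Matrix (Fin 2 × Fin 2 × Fin N) (Fin 2 × Fin 2 × Fin N) ℂ)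
    (e f : Fin 2 → ℂ) (g : Fin N → ℂ) :
    star (prodVec e f g) ⬝ᵥ (ptAB Q) *ᵥ prodVec e f g
      = star (prodVec (star e) (star f) g) ⬝ᵥ Q *ᵥ prodVec (star e) (star f) g := by
  rw [ptAB, quad_ptB, quad_ptA]

lemma norm_le_one_of_unit {ι : Type*} [Fintype ι] (e : ι → ℂ) (h : star e ⬝ᵥ e = 1) :
    ‖e‖ ≤ 1 := by
  have hsum : ∑ j, Complex.normSq (e j) = 1 := by
    have h2 : (↑(∑ j, Complex.normSq (e j)) : ℂ) = 1 := by
      push_cast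
      rw [← h]
      simp [dotProduct, Complex.normSq_eq_conj_mul_self]
    exact_mod_cast h2
  rw [pi_norm_le_iff_of_nonneg zero_le_one]
  intro i
  have hle : Complex.normSq (e i) ≤ 1 := by
    rw [← hsum]
    exact Finset.single_le_sum (fun j _ => Complex.normSq_nonneg _) (Finset.mem_univ i)
  have := Complex.sq_norm (e i)
  have hn : ‖e i‖ ^ 2 ≤ 1 := by rwa [this]
  nlinarith [norm_nonneg (e i)]

lemma unit_single {ι : Type*} [Fintype ι] [DecidableEq ι] (i₀ : ι) :
    star (Pi.single i₀ 1 : ι → ℂ) ⬝ᵥ (Pi.single i₀ 1) = 1 := by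
  simp [dotProduct, Pi.single_apply, apply_ite]

set_option maxHeartbeats 1000000 in
/-- For an edge state `δ` and positive operators `P, Q, R, S` whose ranges are the kernels
of `δ` and of its partial transposes, the quantity
`ε = inf ⟨e⊗f⊗g|P + Q^{t_A} + R^{t_B} + S^{t_{AB}}|e⊗f⊗g⟩` is strictly positive. -/
theorem edge_state_eps_pos (N : ℕ)
    (δ P Q R S : Matrix (Fin 2 × Fin 2 × Fin N) (Fin 2 × Fin 2 × Fin N) ℂ)
    (hδpos : δ.PosSemidef) (hδppt : IsPPT δ) (hδne : δ ≠ 0) (hedge : IsEdgeState δ)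
    (hP : P.PosSemidef) (hQ : Q.PosSemidef) (hR : R.PosSemidef) (hS : S.PosSemidef)
    (hPr : LinearMap.range P.mulVecLin = LinearMap.ker δ.mulVecLin)
    (hQr : LinearMap.range Q.mulVecLin = LinearMap.ker (ptA δ).mulVecLin)
    (hRr : LinearMap.range R.mulVecLin = LinearMap.ker (ptB δ).mulVecLin)
    (hSr : LinearMap.range S.mulVecLin = LinearMap.ker (ptAB δ).mulVecLin) :
    0 < sInf (epsSet P Q R S) := by
  classical
  have hN : NeZero N := ⟨by rintro rfl; exact hδne (by ext x y; exact x.2.2.elim0)⟩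
  set M : Matrix (Fin 2 × Fin 2 × Fin N) (Fin 2 × Fin 2 × Fin N) ℂ
    := P + ptA Q + ptB R + ptAB S with hM
  have hdecomp : ∀ (e f : Fin 2 → ℂ) (g : Fin N → ℂ),
      star (prodVec e f g) ⬝ᵥ M *ᵥ prodVec e f g
        = star (prodVec e f g) ⬝ᵥ P *ᵥ prodVec e f g
        + star (prodVec (star e) f g) ⬝ᵥ Q *ᵥ prodVec (star e) f g
        + star (prodVec e (star f) g) ⬝ᵥ R *ᵥ prodVec e (star f) g
        + star (prodVec (star e) (star f) g) ⬝ᵥ S *ᵥ prodVec (star e) (star f) g := by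
    intro e f g
    rw [hM]
    simp only [Matrix.add_mulVec, dotProduct_add]
    rw [quad_ptA, quad_ptB, quad_ptAB]
  have hreal : ∀ (z : ℂ), 0 ≤ z → z = (z.re : ℂ) ∧ 0 ≤ z.re := by
    intro z hz
    obtain ⟨h1, h2⟩ := Complex.le_def.mp hz
    refine ⟨Complex.ext ?_ ?_, by simpa using h1⟩ <;> simp [← h2]
  have hnonneg : ∀ (e f : Fin 2 → ℂ) (g : Fin N → ℂ),
      0 ≤ star (prodVec e f g) ⬝ᵥ M *ᵥ prodVec e f g := by
    intro e f g
    rw [hdecomp]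
    exact add_nonneg (add_nonneg (add_nonneg (hP.dotProduct_mulVec_nonneg _) (hQ.dotProduct_mulVec_nonneg _)) (hR.dotProduct_mulVec_nonneg _)) (hS.dotProduct_mulVec_nonneg _)
  set F : (Fin 2 → ℂ) × (Fin 2 → ℂ) × (Fin N → ℂ) → ℝ :=
    fun p => (star (prodVec p.1 p.2.1 p.2.2) ⬝ᵥ M *ᵥ prodVec p.1 p.2.1 p.2.2).re with hF
  set K : Set ((Fin 2 → ℂ) × (Fin 2 → ℂ) × (Fin N → ℂ)) :=
    {p | star p.1 ⬝ᵥ p.1 = 1 ∧ star p.2.1 ⬝ᵥ p.2.1 = 1 ∧ star p.2.2 ⬝ᵥ p.2.2 = 1} with hK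
  have kerP : LinearMap.ker P.mulVecLin = LinearMap.range δ.mulVecLin :=
    aux_ker_eq_range δ P hδpos.1 hP.1 hPr
  have kerQ : LinearMap.ker Q.mulVecLin = LinearMap.range (ptA δ).mulVecLin :=
    aux_ker_eq_range (ptA δ) Q hδppt.1.1 hQ.1 hQr
  have kerR : LinearMap.ker R.mulVecLin = LinearMap.range (ptB δ).mulVecLin :=
    aux_ker_eq_range (ptB δ) R hδppt.2.1.1 hR.1 hRr
  have kerS : LinearMap.ker S.mulVecLin = LinearMap.range (ptAB δ).mulVecLin :=
    aux_ker_eq_range (ptAB δ) S hδppt.2.2.1 hS.1 hSr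
  have range_of_zero : ∀ (A T : Matrix (Fin 2 × Fin 2 × Fin N) (Fin 2 × Fin 2 × Fin N) ℂ)
      (v : Fin 2 × Fin 2 × Fin N → ℂ),
      LinearMap.ker T.mulVecLin = LinearMap.range A.mulVecLin → T *ᵥ v = 0 → InRange A v := by
    intro A T v hker hv
    have hv' : v ∈ LinearMap.range A.mulVecLin := by
      rw [← hker]
      simpa [LinearMap.mem_ker, Matrix.mulVecLin_apply] using hv
    obtain ⟨w, hw⟩ := hv'
    exact ⟨w, by simpa [Matrix.mulVecLin_apply] using hw⟩
  have hne_of_unit : ∀ {ι : Type} [Fintype ι] (v : ι → ℂ), star v ⬝ᵥ v = 1 → v ≠ 0 := by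
    intro ι _ v hv h0
    rw [h0] at hv
    simp [dotProduct] at hv
  have hFpos : ∀ p ∈ K, 0 < F p := by
    rintro ⟨e, f, g⟩ ⟨h1, h2, h3⟩
    rcases lt_or_ge 0 (F (e, f, g)) with h | h
    · exact h
    exfalso
    have e1 := hreal _ (hP.dotProduct_mulVec_nonneg (prodVec e f g))
    have e2 := hreal _ (hQ.dotProduct_mulVec_nonneg (prodVec (star e) f g))
    have e3 := hreal _ (hR.dotProduct_mulVec_nonneg (prodVec e (star f) g))
    have e4 := hreal _ (hS.dotProduct_mulVec_nonneg (prodVec (star e) (star f) g))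
    have hsum : F (e, f, g)
        = (star (prodVec e f g) ⬝ᵥ P *ᵥ prodVec e f g).re
        + (star (prodVec (star e) f g) ⬝ᵥ Q *ᵥ prodVec (star e) f g).re
        + (star (prodVec e (star f) g) ⬝ᵥ R *ᵥ prodVec e (star f) g).re
        + (star (prodVec (star e) (star f) g) ⬝ᵥ S *ᵥ prodVec (star e) (star f) g).re := by
      rw [hF]
      simp only [hdecomp e f g, Complex.add_re]
    rw [hsum] at h
    have z1 : star (prodVec e f g) ⬝ᵥ P *ᵥ prodVec e f g = 0 := by
      rw [e1.1]
      exact_mod_cast Complex.ofReal_eq_zero.mpr (by linarith [e1.2, e2.2, e3.2, e4.2])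
    have z2 : star (prodVec (star e) f g) ⬝ᵥ Q *ᵥ prodVec (star e) f g = 0 := by
      rw [e2.1]
      exact_mod_cast Complex.ofReal_eq_zero.mpr (by linarith [e1.2, e2.2, e3.2, e4.2])
    have z3 : star (prodVec e (star f) g) ⬝ᵥ R *ᵥ prodVec e (star f) g = 0 := by
      rw [e3.1]
      exact_mod_cast Complex.ofReal_eq_zero.mpr (by linarith [e1.2, e2.2, e3.2, e4.2])
    have z4 : star (prodVec (star e) (star f) g) ⬝ᵥ S *ᵥ prodVec (star e) (star f) g = 0 := by
      rw [e4.1]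
      exact_mod_cast Complex.ofReal_eq_zero.mpr (by linarith [e1.2, e2.2, e3.2, e4.2])
    exact hedge ⟨e, f, g, hne_of_unit e h1, hne_of_unit f h2, hne_of_unit g h3,
      range_of_zero δ P _ kerP ((hP.dotProduct_mulVec_zero_iff _).mp z1),
      range_of_zero (ptA δ) Q _ kerQ ((hQ.dotProduct_mulVec_zero_iff _).mp z2),
      range_of_zero (ptB δ) R _ kerR ((hR.dotProduct_mulVec_zero_iff _).mp z3),
      range_of_zero (ptAB δ) S _ kerS ((hS.dotProduct_mulVec_zero_iff _).mp z4)⟩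
  have hFc : Continuous F := by
    rw [hF]
    apply Complex.continuous_re.comp
    simp only [dotProduct, Matrix.mulVec, prodVec, Pi.star_apply]
    fun_prop
  have hKc : IsCompact K := by
    apply Metric.isCompact_of_isClosed_isBounded
    · have h1 : IsClosed {p : (Fin 2 → ℂ) × (Fin 2 → ℂ) × (Fin N → ℂ) |
          star p.1 ⬝ᵥ p.1 = 1} :=
        isClosed_eq (by simp only [dotProduct, Pi.star_apply]; fun_prop) continuous_const
      have h2 : IsClosed {p : (Fin 2 → ℂ) × (Fin 2 → ℂ) × (Fin N → ℂ) |
          star p.2.1 ⬝ᵥ p.2.1 = 1} :=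
        isClosed_eq (by simp only [dotProduct, Pi.star_apply]; fun_prop) continuous_const
      have h3 : IsClosed {p : (Fin 2 → ℂ) × (Fin 2 → ℂ) × (Fin N → ℂ) |
          star p.2.2 ⬝ᵥ p.2.2 = 1} :=
        isClosed_eq (by simp only [dotProduct, Pi.star_apply]; fun_prop) continuous_const
      rw [hK, Set.setOf_and, Set.setOf_and]
      exact h1.inter (h2.inter h3)
    · apply Bornology.IsBounded.subset (Metric.isBounded_closedBall (x := 0) (r := 1))
      rintro ⟨e, f, g⟩ ⟨h1, h2, h3⟩
      rw [Metric.mem_closedBall, dist_zero_right, Prod.norm_def]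
      refine max_le (norm_le_one_of_unit _ h1) ?_
      rw [Prod.norm_def]
      exact max_le (norm_le_one_of_unit _ h2) (norm_le_one_of_unit _ h3)
  have hmemK : ((Pi.single 0 1 : Fin 2 → ℂ), (Pi.single 0 1 : Fin 2 → ℂ),
      (Pi.single 0 1 : Fin N → ℂ)) ∈ K :=
    ⟨unit_single 0, unit_single 0, unit_single 0⟩
  obtain ⟨p₀, hp₀K, hp₀min⟩ := hKc.exists_isMinOn ⟨_, hmemK⟩ hFc.continuousOn
  have hmem : F ((Pi.single 0 1 : Fin 2 → ℂ), (Pi.single 0 1 : Fin 2 → ℂ),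
      (Pi.single 0 1 : Fin N → ℂ)) ∈ epsSet P Q R S := by
    refine ⟨_, _, _, unit_single 0, unit_single 0, unit_single 0, ?_⟩
    rw [← hM]
    exact ((hreal _ (hnonneg _ _ _)).1).symm
  have hbound : ∀ r ∈ epsSet P Q R S, F p₀ ≤ r := by
    rintro r ⟨e, f, g, h1, h2, h3, hr⟩
    have hFr : F (e, f, g) = r := by
      rw [← hM] at hr
      have := congrArg Complex.re hr
      rw [Complex.ofReal_re] at this
      exact this.symm
    rw [← hFr]
    exact hp₀min ⟨h1, h2, h3⟩
  exact lt_of_lt_of_le (hFpos p₀ hp₀K) (le_csInf ⟨_, hmem⟩ hbound)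

end
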